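/- (Metric cancellation law) In a convex combination space, for any x, y, z in the convexifiable domain K(X) and λ ∈ [0,1], d([λ,x;1−λ,y], [λ,x;1−λ,z]) = (1−λ)·d(y,z). In particular, if [λ,x;1−λ,y] = [λ,x;1−λ,z] for some λ ∈ [0,1), then y = z. -/

import Mathlib

open scoped BigOperators
open Filter MeasureTheory

/-- A convex combination space (Terán–Molchanov): a metric space with an
`n`-ary convex combination operation for positive weights summing to `1`. -/
structure CCSpace (X : Type) [MetricSpace X] where
  /-- the convex combination operation `[w 0, u 0; …; w (n-1), u (n-1)]` -/
  comb : ∀ {n : ℕ}, (Fin n → ℝ) → (Fin n → X) → X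
  /-- the convexification operator -/
  K : X → X
  comb_single : ∀ u : X, comb (fun _ : Fin 1 => (1 : ℝ)) (fun _ => u) = u
  /-- (CC.i) commutativity -/
  comb_perm : ∀ {n : ℕ} (w : Fin n → ℝ) (u : Fin n → X) (σ : Equiv.Perm (Fin n)),
    (∀ i, 0 < w i) → (∑ i, w i) = 1 → comb w u = comb (w ∘ σ) (u ∘ σ)
  /-- (CC.ii) associativity: the last two terms may be combined first -/
  comb_assoc : ∀ {n : ℕ} (w : Fin (n + 2) → ℝ) (u : Fin (n + 2) → X),
    (∀ i, 0 < w i) → (∑ i, w i) = 1 →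
    comb w u =
      comb
        (Fin.snoc (fun i : Fin n => w (Fin.castLE (by omega) i))
          (w ⟨n, by omega⟩ + w ⟨n + 1, by omega⟩))
        (Fin.snoc (fun i : Fin n => u (Fin.castLE (by omega) i))
          (comb
            ![w ⟨n, by omega⟩ / (w ⟨n, by omega⟩ + w ⟨n + 1, by omega⟩),
              w ⟨n + 1, by omega⟩ / (w ⟨n, by omega⟩ + w ⟨n + 1, by omega⟩)]
            ![u ⟨n, by omega⟩, u ⟨n + 1, by omega⟩]))
  /-- (CC.iii) continuity in the weight -/
  comb_cont : ∀ u v : X,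
    ContinuousOn (fun t : ℝ => comb ![t, 1 - t] ![u, v]) (Set.Ioo (0 : ℝ) 1)
  /-- (CC.iv) negative curvature -/
  comb_nc : ∀ {n : ℕ} (w : Fin n → ℝ) (u v : Fin n → X),
    (∀ i, 0 < w i) → (∑ i, w i) = 1 →
    dist (comb w u) (comb w v) ≤ ∑ i, w i * dist (u i) (v i)
  /-- (CC.v) convexification: `[n⁻¹, u]ᵢ₌₁ⁿ → K u` -/
  tendsto_K : ∀ u : X,
    Tendsto (fun n : ℕ => comb (fun _ : Fin n => (n : ℝ)⁻¹) (fun _ => u))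
      atTop (nhds (K u))

namespace CCSpace

variable {X : Type} [MetricSpace X] (S : CCSpace X)

/-- The convexifiable domain `K(X)`: the set of convex points. -/
def KX : Set X := {u : X | S.K u = u}

/-- Binary convex combination with weights in `[0,1]`, extended to the endpoints
by discarding the zero-weight term. -/
noncomputable def comb2 (t : ℝ) (x y : X) : X :=
  if t = 0 then y else if t = 1 then x else S.comb ![t, 1 - t] ![x, y]

/-- Convex combination for nonnegative weights summing to `1`, defined by
discarding the zero-weight terms. -/
noncomputable def combE {n : ℕ} (w : Fin n → ℝ) (u : Fin n → X) : X :=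
  letI : DecidablePred fun i : Fin n => w i ≠ 0 := Classical.decPred _
  S.comb (fun j => w ((Fintype.equivFin {i : Fin n // w i ≠ 0}).symm j))
    (fun j => u ((Fintype.equivFin {i : Fin n // w i ≠ 0}).symm j))

/-- A function is affine if it commutes with all convex combinations. -/
def IsAffine (f : X → ℝ) : Prop :=
  ∀ ⦃n : ℕ⦄ (w : Fin n → ℝ) (x : Fin n → X), (∀ i, 0 < w i) → (∑ i, w i) = 1 →
    f (S.comb w x) = ∑ i, w i * f (x i)

/-- Midpoint convexity. -/
def MidpointConvex (φ : X → ℝ) : Prop :=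
  ∀ x y : X, φ (S.comb ![(1 : ℝ) / 2, 1 / 2] ![x, y]) ≤ (φ x + φ y) / 2

end CCSpace

namespace CCAux

open CCSpace

variable {X : Type} [MetricSpace X] (S : CCSpace X)

noncomputable def cc2 (a : ℝ) (u v : X) : X := S.comb ![a, 1 - a] ![u, v]

lemma pos2 {a : ℝ} (h0 : 0 < a) (h1 : a < 1) : ∀ i, (0:ℝ) < ![a, 1-a] i := by
  intro i; fin_cases i <;> simp <;> linarith

lemma sum2 (a : ℝ) : (∑ i, (![a, 1-a] : Fin 2 → ℝ) i) = 1 := by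
  simp [Fin.sum_univ_two]

lemma nc2 {a : ℝ} (h0 : 0 < a) (h1 : a < 1) (u v u' v' : X) :
    dist (cc2 S a u v) (cc2 S a u' v') ≤ a * dist u u' + (1-a) * dist v v' := by
  simpa [cc2, Fin.sum_univ_two] using
    S.comb_nc ![a,1-a] ![u,v] ![u',v'] (pos2 h0 h1) (sum2 a)

lemma comm2 {a : ℝ} (h0 : 0 < a) (h1 : a < 1) (u v : X) :
    cc2 S a u v = cc2 S (1-a) v u := by
  have h := S.comb_perm ![a,1-a] ![u,v] (Equiv.swap 0 1) (pos2 h0 h1) (sum2 a)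
  rw [cc2, h, cc2]
  congr 1
  · funext i; fin_cases i <;> simp [Equiv.swap_apply_def] <;> ring
  · funext i; fin_cases i <;> simp [Equiv.swap_apply_def]

lemma pos3 {w0 w1 w2 : ℝ} (h0 : 0 < w0) (h1 : 0 < w1) (h2 : 0 < w2) :
    ∀ i, (0:ℝ) < ![w0,w1,w2] i := by
  intro i; fin_cases i <;> simpa

lemma sum3 {w0 w1 w2 : ℝ} (hs : w0 + w1 + w2 = 1) :
    (∑ i, (![w0,w1,w2] : Fin 3 → ℝ) i) = 1 := by
  simp [Fin.sum_univ_three]; linarith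

lemma assoc3 {w0 w1 w2 : ℝ} (h0 : 0 < w0) (h1 : 0 < w1) (h2 : 0 < w2)
    (hs : w0 + w1 + w2 = 1) (p0 p1 p2 : X) :
    S.comb ![w0, w1, w2] ![p0, p1, p2]
      = cc2 S w0 p0 (cc2 S (w1/(w1+w2)) p1 p2) := by
  have h := S.comb_assoc (n := 1) ![w0,w1,w2] ![p0,p1,p2] (pos3 h0 h1 h2) (sum3 hs)
  rw [h]
  have h12 : w1 + w2 ≠ 0 := by positivity
  congr 1
  · funext i
    fin_cases i
    · rfl
    · show w1 + w2 = 1 - w0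
      linarith
  · funext i
    fin_cases i
    · rfl
    · show S.comb ![w1/(w1+w2), w2/(w1+w2)] ![p1,p2] = _
      rw [cc2]
      congr 1
      funext i
      fin_cases i
      · rfl
      · show w2/(w1+w2) = 1 - w1/(w1+w2)
        field_simp
        ring
lemma pos4 {w0 w1 w2 w3 : ℝ} (h0 : 0 < w0) (h1 : 0 < w1) (h2 : 0 < w2) (h3 : 0 < w3) :
    ∀ i, (0:ℝ) < ![w0,w1,w2,w3] i := by
  intro i; fin_cases i <;> simpa

lemma sum4 {w0 w1 w2 w3 : ℝ} (hs : w0 + w1 + w2 + w3 = 1) :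
    (∑ i, (![w0,w1,w2,w3] : Fin 4 → ℝ) i) = 1 := by
  simp [Fin.sum_univ_four]; linarith

lemma assoc4 {w0 w1 w2 w3 : ℝ} (h0 : 0 < w0) (h1 : 0 < w1) (h2 : 0 < w2) (h3 : 0 < w3)
    (hs : w0 + w1 + w2 + w3 = 1) (p0 p1 p2 p3 : X) :
    S.comb ![w0, w1, w2, w3] ![p0, p1, p2, p3]
      = S.comb ![w0, w1, w2+w3] ![p0, p1, cc2 S (w2/(w2+w3)) p2 p3] := by
  have h := S.comb_assoc (n := 2) ![w0,w1,w2,w3] ![p0,p1,p2,p3] (pos4 h0 h1 h2 h3) (sum4 hs)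
  rw [h]
  have h23 : w2 + w3 ≠ 0 := by positivity
  congr 1
  · funext i; fin_cases i <;> rfl
  · funext i
    fin_cases i
    · rfl
    · rfl
    · show S.comb ![w2/(w2+w3), w3/(w2+w3)] ![p2,p3] = _
      rw [cc2]
      congr 1
      funext i
      fin_cases i
      · rfl
      · show w3/(w2+w3) = 1 - w2/(w2+w3)
        field_simp
        ring

lemma swap3_01 {w0 w1 w2 : ℝ} (h0 : 0 < w0) (h1 : 0 < w1) (h2 : 0 < w2)
    (hs : w0 + w1 + w2 = 1) (p0 p1 p2 : X) :
    S.comb ![w0, w1, w2] ![p0, p1, p2] = S.comb ![w1, w0, w2] ![p1, p0, p2] := by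
  have h := S.comb_perm ![w0,w1,w2] ![p0,p1,p2] (Equiv.swap 0 1) (pos3 h0 h1 h2) (sum3 hs)
  rw [h]
  congr 1 <;> funext i <;> fin_cases i <;> simp [Equiv.swap_apply_def] <;> rfl

lemma swap3_12 {w0 w1 w2 : ℝ} (h0 : 0 < w0) (h1 : 0 < w1) (h2 : 0 < w2)
    (hs : w0 + w1 + w2 = 1) (p0 p1 p2 : X) :
    S.comb ![w0, w1, w2] ![p0, p1, p2] = S.comb ![w0, w2, w1] ![p0, p2, p1] := by
  have h := S.comb_perm ![w0,w1,w2] ![p0,p1,p2] (Equiv.swap 1 2) (pos3 h0 h1 h2) (sum3 hs)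
  rw [h]
  congr 1 <;> funext i <;> fin_cases i <;> simp [Equiv.swap_apply_def] <;> rfl

lemma swap4_12 {w0 w1 w2 w3 : ℝ} (h0 : 0 < w0) (h1 : 0 < w1) (h2 : 0 < w2) (h3 : 0 < w3)
    (hs : w0 + w1 + w2 + w3 = 1) (p0 p1 p2 p3 : X) :
    S.comb ![w0, w1, w2, w3] ![p0, p1, p2, p3]
      = S.comb ![w0, w2, w1, w3] ![p0, p2, p1, p3] := by
  have h := S.comb_perm ![w0,w1,w2,w3] ![p0,p1,p2,p3] (Equiv.swap 1 2) (pos4 h0 h1 h2 h3) (sum4 hs)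
  rw [h]
  congr 1 <;> funext i <;> fin_cases i <;> simp [Equiv.swap_apply_def] <;> rfl

lemma swap4_13 {w0 w1 w2 w3 : ℝ} (h0 : 0 < w0) (h1 : 0 < w1) (h2 : 0 < w2) (h3 : 0 < w3)
    (hs : w0 + w1 + w2 + w3 = 1) (p0 p1 p2 p3 : X) :
    S.comb ![w0, w1, w2, w3] ![p0, p1, p2, p3]
      = S.comb ![w0, w3, w2, w1] ![p0, p3, p2, p1] := by
  have h := S.comb_perm ![w0,w1,w2,w3] ![p0,p1,p2,p3] (Equiv.swap 1 3) (pos4 h0 h1 h2 h3) (sum4 hs)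
  rw [h]
  congr 1 <;> funext i <;> fin_cases i <;> simp [Equiv.swap_apply_def] <;> rfl
noncomputable def acc : ℕ → X → X
  | 0, u => u
  | 1, u => u
  | (j+2), u => cc2 S (1/((j:ℝ)+2)) u (acc (j+1) u)

lemma acc_one (u : X) : acc S 1 u = u := rfl

lemma acc_succ (k : ℕ) (u : X) :
    acc S (k+2) u = cc2 S (1/((k:ℝ)+2)) u (acc S (k+1) u) := rfl

lemma tailg : ∀ j : ℕ, 1 ≤ j → ∀ (t m : ℕ) (hm : m = t + j) (w : Fin m → ℝ)
    (p : Fin m → X) (e : ℝ) (u : X),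
    (∀ i, 0 < w i) → (∑ i, w i) = 1 →
    (∀ i : Fin m, t ≤ i.val → w i = e) → (∀ i : Fin m, t ≤ i.val → p i = u) →
    S.comb w p = S.comb
      (fun i : Fin (t+1) => if h : i.val < t then w ⟨i.val, by omega⟩ else (j:ℝ) * e)
      (fun i : Fin (t+1) => if h : i.val < t then p ⟨i.val, by omega⟩ else acc S j u) := by
  intro j hj
  induction j, hj using Nat.le_induction with
  | base =>
    intro t m hm w p e u hpos hsum hw hp
    subst hm
    congr 1
    · funext i
      by_cases h : i.val < t
      · simp only [dif_pos h, Fin.eta]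
      · rw [dif_neg h, hw i (by omega), Nat.cast_one, one_mul]
    · funext i
      by_cases h : i.val < t
      · simp only [dif_pos h, Fin.eta]
      · rw [dif_neg h, hp i (by omega), acc_one]
  | succ j hj ih =>
    intro t m hm w p e u hpos hsum hw hp
    have hm' : m = (t+1) + j := by omega
    have he : 0 < e := by
      have h1 := hpos ⟨t, by omega⟩
      rwa [hw ⟨t, by omega⟩ (by simp)] at h1
    have hje : (0:ℝ) < (j:ℝ) := by exact_mod_cast (by omega : 0 < j)
    rw [ih (t+1) m hm' w p e u hpos hsum
      (fun i hi => hw i (by omega)) (fun i hi => hp i (by omega))]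
    set W : Fin (t+1+1) → ℝ :=
      fun i => if h : i.val < t+1 then w ⟨i.val, by omega⟩ else (j:ℝ)*e with hWdef
    set P : Fin (t+1+1) → X :=
      fun i => if h : i.val < t+1 then p ⟨i.val, by omega⟩ else acc S j u with hPdef
    have hWt : W ⟨t, by omega⟩ = e := by
      rw [hWdef]; simp only [dif_pos (by omega : t < t+1)]
      exact hw ⟨t, by omega⟩ (by simp)
    have hWt1 : W ⟨t+1, by omega⟩ = (j:ℝ)*e := by
      rw [hWdef]; simp only [dif_neg (by omega : ¬ (t+1 < t+1))]
    have hPt : P ⟨t, by omega⟩ = u := by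
      rw [hPdef]; simp only [dif_pos (by omega : t < t+1)]
      exact hp ⟨t, by omega⟩ (by simp)
    have hPt1 : P ⟨t+1, by omega⟩ = acc S j u := by
      rw [hPdef]; simp only [dif_neg (by omega : ¬ (t+1 < t+1))]
    have hWpos : ∀ i, 0 < W i := by
      intro i
      rw [hWdef]
      by_cases h : i.val < t+1
      · simp only [dif_pos h]; exact hpos _
      · simp only [dif_neg h]; positivity
    -- sum bookkeeping
    have hWsum : (∑ i, W i) = 1 := by
      classical
      set g : ℕ → ℝ := fun i => if h : i < m then w ⟨i, h⟩ else 0 with hgdef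
      have h1 : (∑ i : Fin m, w i) = ∑ i ∈ Finset.range m, g i := by
        rw [← Fin.sum_univ_eq_sum_range g m]
        refine Finset.sum_congr rfl (fun i _ => ?_)
        rw [hgdef]; simp only [dif_pos i.isLt, Fin.eta]
      have hlast : W (Fin.last (t+1)) = (j:ℝ)*e := by
        rw [hWdef]; simp only [Fin.val_last]
        rw [dif_neg (by omega : ¬ (t+1 < t+1))]
      have hcs : ∀ i : Fin (t+1), W (Fin.castSucc i) = g i.val := by
        intro i
        rw [hWdef, hgdef]
        simp only [Fin.coe_castSucc]
        rw [dif_pos (show i.val < t+1 by omega), dif_pos (show i.val < m by omega)]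
      have h2 : (∑ i, W i) = (∑ i ∈ Finset.range (t+1), g i) + (j:ℝ)*e := by
        rw [Fin.sum_univ_castSucc, hlast, ← Fin.sum_univ_eq_sum_range g (t+1)]
        exact congrArg (· + ((j:ℝ)*e)) (Finset.sum_congr rfl fun i _ => hcs i)
      have h3 : (∑ i ∈ Finset.range (t+1), g i) + (∑ i ∈ Finset.Ico (t+1) m, g i)
          = ∑ i ∈ Finset.range m, g i := by
        simp only [Finset.range_eq_Ico]
        exact Finset.sum_Ico_consecutive g (Nat.zero_le _) (by omega)
      have h4 : (∑ i ∈ Finset.Ico (t+1) m, g i) = (j:ℝ)*e := by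
        have hconst : ∀ i ∈ Finset.Ico (t+1) m, g i = e := by
          intro i hi
          rw [Finset.mem_Ico] at hi
          rw [hgdef]
          simp only [dif_pos hi.2]
          exact hw ⟨i, hi.2⟩ (show t ≤ i by omega)
        rw [Finset.sum_congr rfl hconst, Finset.sum_const, Nat.card_Ico, nsmul_eq_mul]
        congr 1
        have hmj : m - (t+1) = j := by omega
        rw [hmj]
      have hfin := hsum
      rw [h1, ← h3, h4] at hfin
      rw [h2]; linarith
    rw [S.comb_assoc (n := t) W P hWpos hWsum]
    obtain ⟨k, rfl⟩ : ∃ k, j = k+1 := ⟨j-1, by omega⟩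
    congr 1
    · funext i
      refine Fin.lastCases ?_ (fun i => ?_) i
      · rw [Fin.snoc_last]
        have : ¬ ((Fin.last t).val < t) := by simp
        rw [dif_neg this, hWt, hWt1]
        push_cast
        ring
      · rw [Fin.snoc_castSucc]
        have h1 : (i.castSucc).val < t := i.isLt
        rw [dif_pos h1, hWdef]
        have h2 : (Fin.castLE (by omega) i : Fin (t+1+1)).val < t+1 := by
          simp only [Fin.coe_castLE]; omega
        simp only [dif_pos h2]
        rfl
    · funext i
      refine Fin.lastCases ?_ (fun i => ?_) i
      · rw [Fin.snoc_last]
        have : ¬ ((Fin.last t).val < t) := by simp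
        rw [dif_neg this, hPt, hPt1, hWt, hWt1]
        have hmat : (![e/(e + (k+1:ℕ)*e), ((k+1:ℕ):ℝ)*e/(e + ((k+1:ℕ):ℝ)*e)] : Fin 2 → ℝ)
            = ![1/((k:ℝ)+2), 1 - 1/((k:ℝ)+2)] := by
          funext i2
          have hne : e + ((k+1:ℕ):ℝ)*e ≠ 0 := by push_cast; nlinarith
          fin_cases i2
          · show e/(e + ((k+1:ℕ):ℝ)*e) = 1/((k:ℝ)+2)
            push_cast
            rw [div_eq_div_iff (by push_cast at hne ⊢; nlinarith) (by nlinarith)]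
            ring
          · show ((k+1:ℕ):ℝ)*e/(e + ((k+1:ℕ):ℝ)*e) = 1 - 1/((k:ℝ)+2)
            push_cast
            field_simp
            ring
        rw [acc_succ]
        show S.comb _ ![u, acc S (k+1) u] = _
        rw [hmat]
        rfl
      · rw [Fin.snoc_castSucc]
        have h1 : (i.castSucc).val < t := i.isLt
        rw [dif_pos h1, hPdef]
        have h2 : (Fin.castLE (by omega) i : Fin (t+1+1)).val < t+1 := by
          simp only [Fin.coe_castLE]; omega
        simp only [dif_pos h2]
        rfl
noncomputable def eqw (n : ℕ) (u : X) : X :=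
  S.comb (fun _ : Fin n => (n : ℝ)⁻¹) (fun _ => u)

lemma eqw_sum {n : ℕ} (hn : 1 ≤ n) : (∑ _i : Fin n, (n:ℝ)⁻¹) = 1 := by
  rw [Finset.sum_const, Finset.card_univ, Fintype.card_fin, nsmul_eq_mul]
  exact mul_inv_cancel₀ (Nat.cast_ne_zero.mpr (by omega))

lemma eqw_pos {n : ℕ} (hn : 1 ≤ n) : (0:ℝ) < (n:ℝ)⁻¹ := by
  have : (0:ℝ) < (n:ℝ) := by exact_mod_cast Nat.pos_of_ne_zero (by omega)
  positivity

lemma eqw_eq_acc {n : ℕ} (hn : 1 ≤ n) (u : X) : eqw S n u = acc S n u := by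
  have h := tailg S n hn 0 n (by omega) (fun _ => (n:ℝ)⁻¹) (fun _ => u) ((n:ℝ)⁻¹) u
    (fun _ => eqw_pos hn) (eqw_sum hn) (fun _ _ => rfl) (fun _ _ => rfl)
  rw [eqw, h]
  have hw : (fun i : Fin 1 => if _ : i.val < 0 then (n:ℝ)⁻¹ else (n:ℝ) * (n:ℝ)⁻¹)
      = fun _ : Fin 1 => (1:ℝ) := by
    funext i
    rw [dif_neg (by omega)]
    exact mul_inv_cancel₀ (Nat.cast_ne_zero.mpr (by omega))
  have hp : (fun i : Fin 1 => if _ : i.val < 0 then u else acc S n u)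
      = fun _ : Fin 1 => acc S n u := by
    funext i; rw [dif_neg (by omega)]
  rw [hw, hp, S.comb_single]

lemma split {k j : ℕ} (hk : 1 ≤ k) (hj : 1 ≤ j) (u : X) :
    eqw S (k+j) u = cc2 S ((j:ℝ)/((k:ℝ)+(j:ℝ))) (acc S j u) (acc S k u) := by
  set n : ℕ := k + j with hn
  have hn1 : 1 ≤ n := by omega
  have hnpos : (0:ℝ) < (n:ℝ) := by exact_mod_cast Nat.pos_of_ne_zero (by omega)
  have hipos := eqw_pos hn1
  -- phase 1 : merge the last j entries
  have h1 := tailg S j hj k n (by omega) (fun _ => (n:ℝ)⁻¹) (fun _ => u) ((n:ℝ)⁻¹) u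
    (fun _ => hipos) (eqw_sum hn1) (fun _ _ => rfl) (fun _ _ => rfl)
  set W1 : Fin (k+1) → ℝ :=
    fun i => if _ : i.val < k then (n:ℝ)⁻¹ else (j:ℝ) * (n:ℝ)⁻¹ with hW1
  set P1 : Fin (k+1) → X :=
    fun i => if _ : i.val < k then u else acc S j u with hP1
  have hW1pos : ∀ i, 0 < W1 i := by
    intro i; simp only [hW1]
    split
    · exact hipos
    · have : (0:ℝ) < (j:ℝ) := by exact_mod_cast Nat.pos_of_ne_zero (by omega)
      positivity
  have hW1sum : (∑ i, W1 i) = 1 := by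
    rw [Fin.sum_univ_castSucc]
    have hcs : ∀ i : Fin k, W1 (Fin.castSucc i) = (n:ℝ)⁻¹ := by
      intro i; simp only [hW1, Fin.coe_castSucc]
      rw [dif_pos i.isLt]
    have hlast : W1 (Fin.last k) = (j:ℝ) * (n:ℝ)⁻¹ := by
      simp only [hW1, Fin.val_last]
      rw [dif_neg (by omega : ¬ (k < k))]
    rw [Finset.sum_congr rfl (fun i _ => hcs i), hlast, Finset.sum_const,
      Finset.card_univ, Fintype.card_fin, nsmul_eq_mul]
    have : ((k:ℝ) + (j:ℝ)) * (n:ℝ)⁻¹ = 1 := by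
      rw [show (k:ℝ) + (j:ℝ) = (n:ℝ) by push_cast [hn]; ring]
      exact mul_inv_cancel₀ (ne_of_gt hnpos)
    linarith
  -- phase 2 : rotate
  set σ : Equiv.Perm (Fin (k+1)) := (finRotate (k+1)).symm with hσ
  have hσ0 : σ 0 = Fin.last k := by
    rw [hσ, Equiv.symm_apply_eq, finRotate_last]
  have hσge : ∀ i : Fin (k+1), 1 ≤ i.val → (σ i).val = i.val - 1 := by
    intro i hi
    have hlt : i.val - 1 < k + 1 := by omega
    have hne : (⟨i.val - 1, hlt⟩ : Fin (k+1)) ≠ Fin.last k := by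
      intro hcontra
      have := congrArg Fin.val hcontra
      simp only [Fin.val_last] at this
      omega
    have : σ i = ⟨i.val - 1, hlt⟩ := by
      rw [hσ, Equiv.symm_apply_eq, finRotate_succ_apply, Fin.ext_iff, Fin.val_add_one_of_lt]
      · simp; omega
      · exact Fin.lt_last_iff_ne_last.mpr hne
    rw [this]
  have h2 := S.comb_perm W1 P1 σ hW1pos hW1sum
  -- phase 3 : merge the k entries of u at the tail
  have hW1σpos : ∀ i, 0 < (W1 ∘ σ) i := fun i => hW1pos (σ i)
  have hW1σsum : (∑ i, (W1 ∘ σ) i) = 1 := by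
    rw [show (∑ i, (W1 ∘ σ) i) = ∑ i, W1 (σ i) from rfl, Equiv.sum_comp σ W1]
    exact hW1sum
  have hW1σtail : ∀ i : Fin (k+1), 1 ≤ i.val → (W1 ∘ σ) i = (n:ℝ)⁻¹ := by
    intro i hi
    show W1 (σ i) = _
    have hlt : (σ i).val < k := by rw [hσge i hi]; omega
    simp only [hW1]
    rw [dif_pos hlt]
  have hP1σtail : ∀ i : Fin (k+1), 1 ≤ i.val → (P1 ∘ σ) i = u := by
    intro i hi
    show P1 (σ i) = _
    have hlt : (σ i).val < k := by rw [hσge i hi]; omega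
    simp only [hP1]
    rw [dif_pos hlt]
  have h3 := tailg S k hk 1 (k+1) (by omega) (W1 ∘ σ) (P1 ∘ σ) ((n:ℝ)⁻¹) u
    hW1σpos hW1σsum hW1σtail hP1σtail
  have hW1σ0 : (W1 ∘ σ) ⟨0, by omega⟩ = (j:ℝ) * (n:ℝ)⁻¹ := by
    show W1 (σ ⟨0, by omega⟩) = _
    rw [show (⟨0, by omega⟩ : Fin (k+1)) = 0 from rfl, hσ0]
    simp only [hW1, Fin.val_last]
    rw [dif_neg (by omega : ¬ (k < k))]
  have hP1σ0 : (P1 ∘ σ) ⟨0, by omega⟩ = acc S j u := by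
    show P1 (σ ⟨0, by omega⟩) = _
    rw [show (⟨0, by omega⟩ : Fin (k+1)) = 0 from rfl, hσ0]
    simp only [hP1, Fin.val_last]
    rw [dif_neg (by omega : ¬ (k < k))]
  rw [eqw, h1, h2, h3]
  rw [cc2]
  congr 1
  · funext i
    fin_cases i
    · show (if _ : (0:ℕ) < 1 then (W1 ∘ σ) ⟨0, by omega⟩ else (k:ℝ) * (n:ℝ)⁻¹)
        = (j:ℝ)/((k:ℝ)+(j:ℝ))
      rw [dif_pos (by omega), hW1σ0]
      rw [show (n:ℝ) = (k:ℝ) + (j:ℝ) by push_cast [hn]; ring]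
      field_simp
    · show (if _ : (1:ℕ) < 1 then (W1 ∘ σ) ⟨1, by omega⟩ else (k:ℝ) * (n:ℝ)⁻¹)
        = 1 - (j:ℝ)/((k:ℝ)+(j:ℝ))
      rw [dif_neg (by omega)]
      rw [show (n:ℝ) = (k:ℝ) + (j:ℝ) by push_cast [hn]; ring]
      have hkj : (0:ℝ) < (k:ℝ) + (j:ℝ) := by
        have h1 : (0:ℝ) < (k:ℝ) := by exact_mod_cast Nat.pos_of_ne_zero (by omega)
        have h2 : (0:ℝ) < (j:ℝ) := by exact_mod_cast Nat.pos_of_ne_zero (by omega)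
        linarith
      field_simp
      ring
  · funext i
    fin_cases i
    · show (if _ : (0:ℕ) < 1 then (P1 ∘ σ) ⟨0, by omega⟩ else acc S k u) = acc S j u
      rw [dif_pos (by omega), hP1σ0]
    · show (if _ : (1:ℕ) < 1 then (P1 ∘ σ) ⟨1, by omega⟩ else acc S k u) = acc S k u
      rw [dif_neg (by omega)]
lemma tendsto_acc (u : X) (hu : S.K u = u) :
    Filter.Tendsto (fun n : ℕ => acc S n u) Filter.atTop (nhds u) := by
  have h := S.tendsto_K u
  rw [hu] at h
  refine h.congr' ?_
  filter_upwards [Filter.eventually_ge_atTop 1] with n hn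
  exact eqw_eq_acc S hn u

lemma idem_aux (u : X) (hu : S.K u = u) (p r : ℕ) (hp : 1 ≤ p) (hpr : p < r) :
    cc2 S ((p:ℝ)/(r:ℝ)) u u = u := by
  have hr0 : (0:ℝ) < (r:ℝ) := by exact_mod_cast Nat.pos_of_ne_zero (by omega)
  have hp0 : (0:ℝ) < (p:ℝ) := by exact_mod_cast Nat.pos_of_ne_zero (by omega)
  have hpr' : (p:ℝ) < (r:ℝ) := by exact_mod_cast hpr
  set a : ℝ := (p:ℝ)/(r:ℝ) with ha
  have ha0 : 0 < a := by positivity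
  have ha1 : a < 1 := by rw [ha, div_lt_one hr0]; exact hpr'
  have key : ∀ ε : ℝ, 0 < ε → dist (cc2 S a u u) u ≤ 3*ε := by
    intro ε hε
    obtain ⟨N, hN⟩ := Metric.tendsto_atTop.mp (tendsto_acc S u hu) ε hε
    set m : ℕ := N + 1 with hm
    have hm1 : 1 ≤ m := by omega
    set j : ℕ := m * p with hjd
    set k : ℕ := m * (r - p) with hkd
    have hj1 : 1 ≤ j := by
      have := Nat.mul_le_mul hm1 hp; simpa [hjd] using this
    have hk1 : 1 ≤ k := by
      have h1 : 1 ≤ r - p := by omega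
      have := Nat.mul_le_mul hm1 h1; simpa [hkd] using this
    have hkj : k + j = m * r := by rw [hkd, hjd]; rw [← Nat.mul_add]; congr 1; omega
    have hle1 : m * 1 ≤ m * p := Nat.mul_le_mul_left m (by omega)
    have hle2 : m * 1 ≤ m * (r - p) := Nat.mul_le_mul_left m (by omega)
    have hjN : N ≤ j := by omega
    have hkN : N ≤ k := by omega
    have hsplit := split S hk1 hj1 u
    have haj : (j:ℝ)/((k:ℝ)+(j:ℝ)) = a := by
      rw [ha, hjd, hkd]
      have : ((m * (r-p) : ℕ):ℝ) + ((m * p : ℕ):ℝ) = (m:ℝ) * (r:ℝ) := by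
        push_cast [Nat.cast_sub (le_of_lt hpr)]
        ring
      rw [this]
      push_cast
      rw [div_eq_div_iff (by positivity) (by positivity)]
      ring
    rw [haj] at hsplit
    have hd1 : dist (cc2 S a u u) (cc2 S a (acc S j u) (acc S k u))
        ≤ a * dist u (acc S j u) + (1-a) * dist u (acc S k u) :=
      nc2 S ha0 ha1 u u (acc S j u) (acc S k u)
    have hdj : dist u (acc S j u) ≤ ε := by
      rw [dist_comm]
      exact le_of_lt (hN j (by omega))
    have hdk : dist u (acc S k u) ≤ ε := by
      rw [dist_comm]
      exact le_of_lt (hN k (by omega))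
    have hdn : dist (acc S (k+j) u) u ≤ ε := le_of_lt (hN (k+j) (by omega))
    have htri := dist_triangle (cc2 S a u u) (cc2 S a (acc S j u) (acc S k u)) u
    rw [← hsplit] at hd1 htri
    have h2 : dist (eqw S (k+j) u) u ≤ ε := by
      rw [eqw_eq_acc S (by omega) u]; exact hdn
    have hub : a * dist u (acc S j u) ≤ ε := by
      calc a * dist u (acc S j u) ≤ 1 * ε := by
            apply mul_le_mul (le_of_lt ha1) hdj dist_nonneg zero_le_one
        _ = ε := one_mul ε
    have hub2 : (1-a) * dist u (acc S k u) ≤ ε := by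
      calc (1-a) * dist u (acc S k u) ≤ 1 * ε := by
            apply mul_le_mul (by linarith) hdk dist_nonneg zero_le_one
        _ = ε := one_mul ε
    linarith
  by_contra hne
  have hpos : 0 < dist (cc2 S a u u) u := by
    rcases lt_or_eq_of_le (dist_nonneg (x := cc2 S a u u) (y := u)) with h | h
    · exact h
    · exact absurd (dist_eq_zero.mp h.symm) hne
  have := key (dist (cc2 S a u u) u / 4) (by positivity)
  linarith

lemma idem (u : X) (hu : S.K u = u) {a : ℝ} (h0 : 0 < a) (h1 : a < 1) :
    cc2 S a u u = u := by
  have hrat : ∀ q : ℚ, 0 < q → q < 1 → cc2 S ((q:ℚ):ℝ) u u = u := by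
    intro q hq0 hq1
    have hnum : 0 < q.num := Rat.num_pos.mpr hq0
    have hlt : q.num < q.den := by
      exact Rat.lt_one_iff_num_lt_denom.mpr hq1
    have h3 : ((q.num.toNat : ℕ):ℝ) = ((q.num : ℤ) : ℝ) := by
      rw_mod_cast [Int.toNat_of_nonneg (le_of_lt hnum)]
    have hcast : ((q:ℚ):ℝ) = ((q.num.toNat : ℕ):ℝ)/((q.den : ℕ):ℝ) := by
      rw [Rat.cast_def, h3]
    rw [hcast]
    refine idem_aux S u hu q.num.toNat q.den ?_ ?_
    · omega
    · omega
  -- now extend by continuity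
  have hcwa := (S.comb_cont u u) a ⟨h0, h1⟩
  -- rational sequence approaching a from below
  have hex : ∀ n : ℕ, ∃ q : ℚ, max 0 (a - 1/((n:ℝ)+1)) < (q:ℝ) ∧ (q:ℝ) < a := by
    intro n
    apply exists_rat_btwn
    rw [max_lt_iff]
    constructor
    · exact h0
    · have : (0:ℝ) < 1/((n:ℝ)+1) := by positivity
      linarith
  choose q hq1 hq2 using hex
  have hq0 : ∀ n, (0:ℝ) < (q n : ℝ) := fun n => lt_of_le_of_lt (le_max_left _ _) (hq1 n)
  have hqlt1 : ∀ n, ((q n : ℚ):ℝ) < 1 := fun n => lt_trans (hq2 n) h1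
  have hmem : ∀ n, ((q n : ℚ):ℝ) ∈ Set.Ioo (0:ℝ) 1 := fun n => ⟨hq0 n, hqlt1 n⟩
  have hlow : ∀ n : ℕ, a - 1/((n:ℝ)+1) ≤ (q n : ℝ) :=
    fun n => le_of_lt (lt_of_le_of_lt (le_max_right _ _) (hq1 n))
  have htlow : Filter.Tendsto (fun n : ℕ => a - 1/((n:ℝ)+1)) Filter.atTop (nhds a) := by
    have := (tendsto_one_div_add_atTop_nhds_zero_nat :
      Filter.Tendsto (fun n : ℕ => 1 / ((n : ℝ) + 1)) Filter.atTop (nhds 0))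
    have h2 := Filter.Tendsto.sub (tendsto_const_nhds (x := a) (f := Filter.atTop)) this
    simpa using h2
  have hten : Filter.Tendsto (fun n : ℕ => ((q n : ℚ):ℝ)) Filter.atTop (nhds a) :=
    tendsto_of_tendsto_of_tendsto_of_le_of_le htlow tendsto_const_nhds
      hlow (fun n => le_of_lt (hq2 n))
  have hten' : Filter.Tendsto (fun n : ℕ => ((q n : ℚ):ℝ)) Filter.atTop
      (nhdsWithin a (Set.Ioo (0:ℝ) 1)) :=
    tendsto_nhdsWithin_of_tendsto_nhds_of_eventually_within _ hten
      (Filter.Eventually.of_forall hmem)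
  have hcomp := (hcwa.tendsto).comp hten'
  have heq : ∀ n : ℕ, (fun t : ℝ => S.comb ![t, 1-t] ![u,u]) ((q n : ℚ):ℝ) = u := by
    intro n
    have := hrat (q n) (by exact_mod_cast hq0 n) (by exact_mod_cast hqlt1 n)
    exact this
  have hconst : Filter.Tendsto (fun _ : ℕ => u) Filter.atTop
      (nhds (S.comb ![a, 1-a] ![u,u])) := by
    refine Filter.Tendsto.congr (fun n => (heq n)) hcomp
  have := tendsto_nhds_unique hconst tendsto_const_nhds
  rw [cc2, this]
lemma expand2 {c l : ℝ} (hc0 : 0 < c) (hc1 : c < 1) (hl0 : 0 < l) (hl1 : l < 1)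
    (xx yy v : X) :
    cc2 S c (cc2 S l xx yy) v = S.comb ![1-c, c*l, c*(1-l)] ![v, xx, yy] := by
  have h1 : cc2 S c (cc2 S l xx yy) v = cc2 S (1-c) v (cc2 S l xx yy) :=
    comm2 S hc0 hc1 _ _
  have h2 := assoc3 S (by linarith : (0:ℝ) < 1-c) (mul_pos hc0 hl0)
    (mul_pos hc0 (by linarith : (0:ℝ) < 1-l)) (by ring) v xx yy
  have hr : (c*l)/((c*l)+(c*(1-l))) = l := by
    rw [show (c*l)+(c*(1-l)) = c by ring]
    field_simp
  rw [hr] at h2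
  rw [h1, h2]

lemma merge3 {a b d : ℝ} (ha : 0 < a) (hb : 0 < b) (hd : 0 < d)
    (hs : a + b + d = 1) (xx v : X) (hv : S.K v = v) :
    S.comb ![a, b, d] ![xx, v, v] = cc2 S a xx v := by
  rw [assoc3 S ha hb hd hs xx v v]
  congr 1
  have hbd : 0 < b + d := by linarith
  exact idem S v hv (div_pos hb hbd) ((div_lt_one hbd).mpr (by linarith))

lemma ID1 {c l : ℝ} (hc0 : 0 < c) (hc1 : c < 1) (hl0 : 0 < l) (hl1 : l < 1)
    (x y : X) (hy : S.K y = y) :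
    cc2 S c (cc2 S l x y) y = cc2 S (c*l) x y := by
  rw [expand2 S hc0 hc1 hl0 hl1 x y y]
  rw [swap3_01 S (by linarith) (mul_pos hc0 hl0) (mul_pos hc0 (by linarith)) (by ring)]
  exact merge3 S (mul_pos hc0 hl0) (by linarith) (mul_pos hc0 (by linarith)) (by ring) x y hy

lemma ID3 {c l : ℝ} (hc0 : 0 < c) (hc1 : c < 1) (hl0 : 0 < l) (hl1 : l < 1)
    (x y z : X) :
    cc2 S c (cc2 S l x z) y = S.comb ![c*l, 1-c, c*(1-l)] ![x, y, z] := by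
  rw [expand2 S hc0 hc1 hl0 hl1 x z y]
  rw [swap3_01 S (by linarith) (mul_pos hc0 hl0) (mul_pos hc0 (by linarith)) (by ring)]

lemma ID4 {c l : ℝ} (hc0 : 0 < c) (hc1 : c < 1) (hl0 : 0 < l) (hl1 : l < 1)
    (x y z : X) :
    cc2 S c (cc2 S l x y) z = S.comb ![c*l, c*(1-l), 1-c] ![x, y, z] := by
  rw [expand2 S hc0 hc1 hl0 hl1 x y z]
  rw [swap3_01 S (by linarith) (mul_pos hc0 hl0) (mul_pos hc0 (by linarith)) (by ring)]
  rw [swap3_12 S (mul_pos hc0 hl0) (by linarith) (mul_pos hc0 (by linarith)) (by ring)]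

lemma ID5 {c l p : ℝ} (hc0 : 0 < c) (hc1 : c < 1) (hl0 : 0 < l) (hl1 : l < 1)
    (hp0 : 0 < p) (hp1 : p < 1) (x y z : X) (hy : S.K y = y) :
    cc2 S c (cc2 S l x y) (cc2 S p y z)
      = S.comb ![c*l, c*(1-l)+(1-c)*p, (1-c)*(1-p)] ![x, y, z] := by
  have h1l : (0:ℝ) < 1 - l := by linarith
  have h1c : (0:ℝ) < 1 - c := by linarith
  have h1p : (0:ℝ) < 1 - p := by linarith
  rw [expand2 S hc0 hc1 hl0 hl1 x y (cc2 S p y z)]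
  rw [swap3_01 S h1c (mul_pos hc0 hl0) (mul_pos hc0 h1l) (by ring)]
  rw [swap3_12 S (mul_pos hc0 hl0) h1c (mul_pos hc0 h1l) (by ring)]
  -- now: comb ![c*l, c*(1-l), 1-c] ![x, y, cc2 p y z]
  have h4 := assoc4 S (mul_pos hc0 hl0) (mul_pos hc0 h1l)
    (mul_pos h1c hp0) (mul_pos h1c h1p) (by ring) x y y z
  have hr : ((1-c)*p)/(((1-c)*p)+((1-c)*(1-p))) = p := by
    rw [show ((1-c)*p)+((1-c)*(1-p)) = 1-c by ring]
    field_simp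
  rw [hr, show ((1-c)*p)+((1-c)*(1-p)) = 1-c by ring] at h4
  rw [← h4]
  rw [swap4_13 S (mul_pos hc0 hl0) (mul_pos hc0 h1l) (mul_pos h1c hp0)
    (mul_pos h1c h1p) (by ring)]
  -- now: comb ![c*l, (1-c)*(1-p), (1-c)*p, c*(1-l)] ![x, z, y, y]
  have h5 := assoc4 S (mul_pos hc0 hl0) (mul_pos h1c h1p) (mul_pos h1c hp0)
    (mul_pos hc0 h1l) (by ring) x z y y
  rw [h5]
  have hden : (0:ℝ) < (1-c)*p + c*(1-l) := by
    have := mul_pos h1c hp0; have := mul_pos hc0 h1l; linarith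
  have hidem : cc2 S (((1-c)*p)/(((1-c)*p)+(c*(1-l)))) y y = y :=
    idem S y hy (div_pos (mul_pos h1c hp0) hden)
      ((div_lt_one hden).mpr (by nlinarith))
  rw [hidem]
  rw [swap3_12 S (mul_pos hc0 hl0) (mul_pos h1c h1p) (by positivity) (by ring)]
  congr 2
  ring

lemma ID6 {c l p : ℝ} (hc0 : 0 < c) (hc1 : c < 1) (hl0 : 0 < l) (hl1 : l < 1)
    (hp0 : 0 < p) (hp1 : p < 1) (x y z : X) (hz : S.K z = z) :
    cc2 S c (cc2 S l x z) (cc2 S p y z)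
      = S.comb ![c*l, (1-c)*p, c*(1-l)+(1-c)*(1-p)] ![x, y, z] := by
  have h1l : (0:ℝ) < 1 - l := by linarith
  have h1c : (0:ℝ) < 1 - c := by linarith
  have h1p : (0:ℝ) < 1 - p := by linarith
  rw [expand2 S hc0 hc1 hl0 hl1 x z (cc2 S p y z)]
  rw [swap3_01 S h1c (mul_pos hc0 hl0) (mul_pos hc0 h1l) (by ring)]
  rw [swap3_12 S (mul_pos hc0 hl0) h1c (mul_pos hc0 h1l) (by ring)]
  -- now: comb ![c*l, c*(1-l), 1-c] ![x, z, cc2 p y z]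
  have h4 := assoc4 S (mul_pos hc0 hl0) (mul_pos hc0 h1l)
    (mul_pos h1c hp0) (mul_pos h1c h1p) (by ring) x z y z
  have hr : ((1-c)*p)/(((1-c)*p)+((1-c)*(1-p))) = p := by
    rw [show ((1-c)*p)+((1-c)*(1-p)) = 1-c by ring]
    field_simp
  rw [hr, show ((1-c)*p)+((1-c)*(1-p)) = 1-c by ring] at h4
  rw [← h4]
  rw [swap4_12 S (mul_pos hc0 hl0) (mul_pos hc0 h1l) (mul_pos h1c hp0)
    (mul_pos h1c h1p) (by ring)]
  -- now: comb ![c*l, (1-c)*p, c*(1-l), (1-c)*(1-p)] ![x, y, z, z]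
  have h5 := assoc4 S (mul_pos hc0 hl0) (mul_pos h1c hp0) (mul_pos hc0 h1l)
    (mul_pos h1c h1p) (by ring) x y z z
  rw [h5]
  have hden : (0:ℝ) < c*(1-l) + (1-c)*(1-p) := by
    have := mul_pos hc0 h1l; have := mul_pos h1c h1p; linarith
  have hidem : cc2 S ((c*(1-l))/((c*(1-l))+((1-c)*(1-p)))) z z = z :=
    idem S z hz (div_pos (mul_pos hc0 h1l) hden)
      ((div_lt_one hden).mpr (by nlinarith))
  rw [hidem]
lemma mrw {w0 w1 w2 w0' w1' w2' : ℝ} (h0 : w0 = w0') (h1 : w1 = w1') (h2 : w2 = w2')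
    (P : Fin 3 → X) : S.comb ![w0,w1,w2] P = S.comb ![w0',w1',w2'] P := by
  rw [h0, h1, h2]

/-- The key chain estimate: for each `m ≥ 2`, with `c = 1/(m(1-l)+l)`,
`dist y z ≤ c*l*(dist x y + dist x z) + m*c*dist A B`. -/
lemma chain_est {l : ℝ} (hl0 : 0 < l) (hl1 : l < 1) (x y z : X)
    (hy : S.K y = y) (hz : S.K z = z) (m : ℕ) (hm : 2 ≤ m) :
    dist y z ≤ (1/((m:ℝ)*(1-l)+l))*l*(dist x y + dist x z)
      + (m:ℝ)*(1/((m:ℝ)*(1-l)+l))*(dist (cc2 S l x y) (cc2 S l x z)) := by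
  have h1l : (0:ℝ) < 1 - l := by linarith
  have hm2 : (2:ℝ) ≤ (m:ℝ) := by exact_mod_cast hm
  set c : ℝ := 1/((m:ℝ)*(1-l)+l) with hc_def
  have hden : (0:ℝ) < (m:ℝ)*(1-l)+l := by nlinarith
  have hden1 : (1:ℝ) < (m:ℝ)*(1-l)+l := by nlinarith
  have hc0 : 0 < c := by rw [hc_def]; positivity
  have hc1 : c < 1 := by rw [hc_def]; rw [div_lt_one hden]; exact hden1
  have h1c : (0:ℝ) < 1 - c := by linarith
  set e : ℝ := c*(1-l) with he_def
  have he0 : 0 < e := by rw [he_def]; exact mul_pos hc0 h1l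
  have hminv : c * ((m:ℝ)*(1-l)+l) = 1 := by
    rw [hc_def]; field_simp
  have hme : (m:ℝ)*e = 1 - c*l := by
    rw [he_def]; linear_combination hminv
  have h1ce : 1 - c = ((m:ℝ)-1)*e := by linear_combination he_def - hme
  have hcl0 : 0 < c*l := mul_pos hc0 hl0
  have hcl1 : c*l < 1 := by nlinarith
  set A : X := cc2 S l x y with hA
  set B : X := cc2 S l x z with hB
  set δ : ℝ := dist A B with hδ
  have hδ0 : 0 ≤ δ := dist_nonneg
  -- the chain of points
  set Q : ℕ → X := fun k =>
    if k = 0 then cc2 S (c*l) x y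
    else if m ≤ k then cc2 S (c*l) x z
    else S.comb ![c*l, ((m:ℝ)-(k:ℝ))*e, (k:ℝ)*e] ![x,y,z] with hQ
  have hQ0 : Q 0 = cc2 S (c*l) x y := by simp only [hQ]; norm_num
  have hQm : Q m = cc2 S (c*l) x z := by
    simp only [hQ]
    rw [if_neg (by omega), if_pos (le_refl m)]
  have hQmid : ∀ k : ℕ, 1 ≤ k → k < m →
      Q k = S.comb ![c*l, ((m:ℝ)-(k:ℝ))*e, (k:ℝ)*e] ![x,y,z] := by
    intro k h1 h2
    simp only [hQ]
    rw [if_neg (by omega), if_neg (by omega)]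
  -- single step bound
  have hstep : ∀ k : ℕ, k < m → dist (Q k) (Q (k+1)) ≤ c * δ := by
    intro k hk
    rcases Nat.eq_zero_or_pos k with rfl | hk1
    · -- first step
      have hQ1 : Q 1 = S.comb ![c*l, 1-c, c*(1-l)] ![x,y,z] := by
        rw [hQmid 1 (le_refl 1) (by omega)]
        refine mrw S rfl ?_ ?_ _
        · push_cast; linear_combination hme - he_def
        · push_cast; rw [one_mul, he_def]
      rw [hQ0, hQ1, ← ID1 S hc0 hc1 hl0 hl1 x y hy, ← ID3 S hc0 hc1 hl0 hl1 x y z]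
      have := nc2 S hc0 hc1 (cc2 S l x y) y (cc2 S l x z) y
      rw [dist_self y] at this
      rw [← hA, ← hB, ← hδ] at this
      linarith
    · rcases Nat.lt_or_ge (k+1) m with hk2 | hk2
      · -- middle step
        set p : ℝ := (((m:ℝ)-(k:ℝ)-1)*e)/(1-c) with hp_def
        have hmk1 : (1:ℝ) ≤ (m:ℝ)-(k:ℝ)-1 := by
          have : (k:ℝ) + 2 ≤ (m:ℝ) := by exact_mod_cast (by omega : k + 2 ≤ m)
          linarith
        have hkR : (1:ℝ) ≤ (k:ℝ) := by exact_mod_cast hk1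
        have hp0 : 0 < p := by
          rw [hp_def]; apply div_pos (by nlinarith) h1c
        have hp1 : p < 1 := by
          rw [hp_def, div_lt_one h1c, h1ce]
          nlinarith
        have hq1 : Q k = cc2 S c A (cc2 S p y z) := by
          rw [hQmid k hk1 hk, hA, ID5 S hc0 hc1 hl0 hl1 hp0 hp1 x y z hy]
          refine mrw S rfl ?_ ?_ _
          · rw [he_def, hp_def]; field_simp; ring
          · rw [hp_def]
            have : (1-c)*(1-(((m:ℝ)-(k:ℝ)-1)*e)/(1-c)) = (1-c) - ((m:ℝ)-(k:ℝ)-1)*e := by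
              field_simp
            rw [this, h1ce]; ring
        have hq2 : Q (k+1) = cc2 S c B (cc2 S p y z) := by
          rw [hQmid (k+1) (by omega) hk2, hB, ID6 S hc0 hc1 hl0 hl1 hp0 hp1 x y z hz]
          refine mrw S rfl ?_ ?_ _
          · rw [hp_def]
            have : (1-c)*((((m:ℝ)-(k:ℝ)-1)*e)/(1-c)) = ((m:ℝ)-(k:ℝ)-1)*e := by
              field_simp
            rw [this]; push_cast; ring
          · rw [hp_def]
            have : (1-c)*(1-(((m:ℝ)-(k:ℝ)-1)*e)/(1-c)) = (1-c) - ((m:ℝ)-(k:ℝ)-1)*e := by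
              field_simp
            rw [mul_sub, this, h1ce, he_def]; push_cast; ring
        rw [hq1, hq2]
        have := nc2 S hc0 hc1 A (cc2 S p y z) B (cc2 S p y z)
        rw [dist_self, ← hδ] at this
        linarith
      · -- last step : k+1 = m
        have hkm : k + 1 = m := by omega
        have hq1 : Q k = cc2 S c A z := by
          rw [hQmid k hk1 hk, hA, ID4 S hc0 hc1 hl0 hl1 x y z]
          refine mrw S rfl ?_ ?_ _
          · have : (m:ℝ)-(k:ℝ) = 1 := by
              have : ((k:ℕ):ℝ) + 1 = ((m:ℕ):ℝ) := by exact_mod_cast congrArg (Nat.cast : ℕ → ℝ) hkm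
              linarith
            rw [this, one_mul, he_def]
          · have : (k:ℝ) = (m:ℝ)-1 := by
              have : ((k:ℕ):ℝ) + 1 = ((m:ℕ):ℝ) := by exact_mod_cast congrArg (Nat.cast : ℕ → ℝ) hkm
              linarith
            rw [this, ← h1ce]
        have hq2 : Q (k+1) = cc2 S c B z := by
          rw [hkm, hQm, hB, ← ID1 S hc0 hc1 hl0 hl1 x z hz]
        rw [hq1, hq2]
        have := nc2 S hc0 hc1 A z B z
        rw [dist_self, ← hδ] at this
        linarith
  -- iterate
  have hiter : ∀ k : ℕ, k ≤ m → dist (Q 0) (Q k) ≤ (k:ℝ) * (c*δ) := by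
    intro k
    induction k with
    | zero => intro _; simp
    | succ k ih =>
      intro hkm
      have h1 := ih (by omega)
      have h2 := hstep k (by omega)
      have h3 := dist_triangle (Q 0) (Q k) (Q (k+1))
      push_cast
      nlinarith
  have hy0 : dist y (Q 0) ≤ c*l*(dist x y) := by
    have hyy : y = cc2 S (c*l) y y := (idem S y hy hcl0 hcl1).symm
    calc dist y (Q 0) = dist (cc2 S (c*l) y y) (cc2 S (c*l) x y) := by rw [hQ0, ← hyy]
      _ ≤ c*l*(dist y x) + (1-c*l)*(dist y y) := nc2 S hcl0 hcl1 y y x y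
      _ = c*l*(dist x y) := by rw [dist_self, dist_comm y x]; ring
  have hzm : dist (Q m) z ≤ c*l*(dist x z) := by
    have hzz : z = cc2 S (c*l) z z := (idem S z hz hcl0 hcl1).symm
    calc dist (Q m) z = dist (cc2 S (c*l) x z) (cc2 S (c*l) z z) := by rw [hQm, ← hzz]
      _ ≤ c*l*(dist x z) + (1-c*l)*(dist z z) := nc2 S hcl0 hcl1 x z z z
      _ = c*l*(dist x z) := by rw [dist_self]; ring
  have htri1 := dist_triangle y (Q 0) z
  have htri2 := dist_triangle (Q 0) (Q m) z
  have hQQ := hiter m (le_refl m)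
  have hfin : dist y z ≤ c*l*(dist x y) + c*l*(dist x z) + (m:ℝ)*(c*δ) := by linarith
  calc dist y z ≤ c*l*(dist x y) + c*l*(dist x z) + (m:ℝ)*(c*δ) := hfin
    _ = c*l*(dist x y + dist x z) + (m:ℝ)*c*δ := by ring
lemma cancel_eq {l : ℝ} (hl0 : 0 < l) (hl1 : l < 1) (x y z : X)
    (hy : S.K y = y) (hz : S.K z = z) :
    dist (cc2 S l x y) (cc2 S l x z) = (1-l) * dist y z := by
  have h1l : (0:ℝ) < 1 - l := by linarith
  set δ : ℝ := dist (cc2 S l x y) (cc2 S l x z) with hδ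
  have hδ0 : 0 ≤ δ := dist_nonneg
  -- upper bound
  have hub : δ ≤ (1-l) * dist y z := by
    have := nc2 S hl0 hl1 x y x z
    rw [dist_self] at this
    rw [hδ]; linarith
  -- lower bound
  have hlb : dist y z ≤ δ / (1-l) := by
    have hev : ∀ m : ℕ, 2 ≤ m →
        dist y z ≤ (1/((m:ℝ)*(1-l)+l))*(l*(dist x y + dist x z)) + δ/(1-l) := by
      intro m hm
      have h := chain_est S hl0 hl1 x y z hy hz m hm
      rw [← hδ] at h
      set c : ℝ := 1/((m:ℝ)*(1-l)+l) with hc_def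
      have hm2 : (2:ℝ) ≤ (m:ℝ) := by exact_mod_cast hm
      have hden : (0:ℝ) < (m:ℝ)*(1-l)+l := by nlinarith
      have hc0 : 0 < c := by rw [hc_def]; positivity
      have hkey : (m:ℝ)*c*(1-l) ≤ 1 := by
        rw [hc_def]
        have hrw : (m:ℝ)*(1/((m:ℝ)*(1-l)+l))*(1-l) = ((m:ℝ)*(1-l))/((m:ℝ)*(1-l)+l) := by
          ring
        rw [hrw, div_le_one hden]
        nlinarith
      have hmc : (m:ℝ)*c ≤ 1/(1-l) := by
        rw [le_div_iff₀ h1l]; linarith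
      have h2 : (m:ℝ)*c*δ ≤ δ/(1-l) := by
        calc (m:ℝ)*c*δ ≤ (1/(1-l))*δ := by
              apply mul_le_mul_of_nonneg_right hmc hδ0
          _ = δ/(1-l) := by ring
      calc dist y z ≤ c*l*(dist x y + dist x z) + (m:ℝ)*c*δ := h
        _ ≤ c*(l*(dist x y + dist x z)) + δ/(1-l) := by
              rw [← mul_assoc]; linarith
    -- pass to the limit
    have hc_lim : Filter.Tendsto (fun m : ℕ => 1/((m:ℝ)*(1-l)+l))
        Filter.atTop (nhds 0) := by
      have h1 : Filter.Tendsto (fun m : ℕ => (m:ℝ)*(1-l)+l) Filter.atTop Filter.atTop := by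
        apply Filter.tendsto_atTop_add_const_right
        exact Filter.Tendsto.atTop_mul_const h1l tendsto_natCast_atTop_atTop
      simpa [one_div, Pi.inv_def] using h1.inv_tendsto_atTop
    have hlim : Filter.Tendsto
        (fun m : ℕ => (1/((m:ℝ)*(1-l)+l))*(l*(dist x y + dist x z)) + δ/(1-l))
        Filter.atTop (nhds (δ/(1-l))) := by
      have := (hc_lim.mul_const (l*(dist x y + dist x z))).add_const (δ/(1-l))
      simpa using this
    refine ge_of_tendsto hlim ?_
    filter_upwards [Filter.eventually_ge_atTop 2] with m hm
    exact hev m hm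
  have hlb' : (1-l) * dist y z ≤ δ := by
    rw [← le_div_iff₀' h1l]
    exact hlb
  linarith

theorem stmt1' {X : Type} [MetricSpace X] (S : CCSpace X) (x y z : X)
    (hx : x ∈ S.KX) (hy : y ∈ S.KX) (hz : z ∈ S.KX) (l : ℝ)
    (hl : l ∈ Set.Icc (0 : ℝ) 1) :
    dist (S.comb2 l x y) (S.comb2 l x z) = (1 - l) * dist y z ∧
      (l < 1 → S.comb2 l x y = S.comb2 l x z → y = z) := by
  obtain ⟨hl0, hl1⟩ := hl
  rcases eq_or_lt_of_le hl0 with h0 | h0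
  · -- l = 0
    have hy' : S.comb2 l x y = y := by rw [CCSpace.comb2, if_pos h0.symm]
    have hz' : S.comb2 l x z = z := by rw [CCSpace.comb2, if_pos h0.symm]
    rw [hy', hz', ← h0]
    exact ⟨by ring, fun _ h => h⟩
  rcases eq_or_lt_of_le hl1 with h1 | h1
  · -- l = 1
    have hy' : S.comb2 l x y = x := by
      rw [CCSpace.comb2, if_neg (by linarith), if_pos h1]
    have hz' : S.comb2 l x z = x := by
      rw [CCSpace.comb2, if_neg (by linarith), if_pos h1]
    rw [hy', hz', h1]
    refine ⟨by rw [dist_self]; ring, fun hc _ => absurd hc (lt_irrefl 1)⟩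
  · -- 0 < l < 1
    have hy' : S.comb2 l x y = cc2 S l x y := by
      rw [CCSpace.comb2, if_neg (by linarith), if_neg (by linarith)]; rfl
    have hz' : S.comb2 l x z = cc2 S l x z := by
      rw [CCSpace.comb2, if_neg (by linarith), if_neg (by linarith)]; rfl
    have hKy : S.K y = y := hy
    have hKz : S.K z = z := hz
    have heq := cancel_eq S h0 h1 x y z hKy hKz
    rw [hy', hz']
    refine ⟨heq, fun _ hEq => ?_⟩
    rw [hEq] at heq
    rw [dist_self] at heq
    have : dist y z = 0 := by
      have h1l : (0:ℝ) < 1 - l := by linarith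
      rcases mul_eq_zero.mp heq.symm with h | h
      · linarith
      · exact h
    exact dist_eq_zero.mp this

end CCAux

/-- Metric cancellation law in the convexifiable domain, and the resulting
algebraic cancellation law. -/
theorem stmt1 {X : Type} [MetricSpace X] (S : CCSpace X) (x y z : X)
    (hx : x ∈ S.KX) (hy : y ∈ S.KX) (hz : z ∈ S.KX) (l : ℝ)
    (hl : l ∈ Set.Icc (0 : ℝ) 1) :
    dist (S.comb2 l x y) (S.comb2 l x z) = (1 - l) * dist y z ∧
      (l < 1 → S.comb2 l x y = S.comb2 l x z → y = z) :=
  CCAux.stmt1' S x y z hx hy hz l hl
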